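/- arXiv:1102.2734 — 2 statements merged into one kernel-verified Lean document; each statement's English description precedes it below -/
import Mathlib

section
/- Let m ≥ 2 be even and let i, j be integers with 0 ≤ i ≤ α^(m) and 0 ≤ j ≤ β^(m). Then: (a) P^(m)(i,j) implies P^(m+1)(2i+1, 2j); (b) if i ≥ 1, then P^(m)(i−1,j) and P^(m)(i,j) together imply P^(m+1)(2i, 2j); (c) if j+1 ≤ β^(m), then P^(m)(i,j) and P^(m)(i,j+1) together imply P^(m+1)(2i+1, 2j+1); (d) if i ≥ 1 and j+1 ≤ β^(m), then P^(m)(i−1,j), P^(m)(i,j), P^(m)(i−1,j+1) and P^(m)(i,j+1) together imply P^(m+1)(2i, 2j+1). -/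
open Module

/-- `α(m)`: the largest integer not exceeding `(2/3)·2^m`. -/
def alph (m : ℕ) : ℕ := 2 ^ (m + 1) / 3

/-- `β(m)`: the largest integer not exceeding `(1/3)·2^m`. -/
def bet (m : ℕ) : ℕ := 2 ^ m / 3

/-- `wt x`: the number of ones in the binary representation of `x`. -/
def wtN (x : ℕ) : ℕ := (Nat.digits 2 x).count 1

/-- `w_l(S)`: the number of elements of `S` of binary weight at least `l`. -/
def wcount (l : ℕ) (S : Finset ℕ) : ℕ := (S.filter fun x => l ≤ wtN x).card

/-- The statement `P^(m)(i,j)`: for every `l ∈ {1,…,m}`,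
`w_l([α−i, α−1]) + w_l([β−j, β−1]) ≥ w_l([1, i+j])`. -/
def Pm (m i j : ℕ) : Prop :=
  ∀ l, 1 ≤ l → l ≤ m →
    wcount l (Finset.Icc (alph m - i) (alph m - 1)) +
      wcount l (Finset.Icc (bet m - j) (bet m - 1)) ≥
      wcount l (Finset.Icc 1 (i + j))

/-! ### Auxiliary definitions and lemmas -/

/-- Indicator: `1` if `wt x ≥ l`, else `0`. -/
def ind (l x : ℕ) : ℕ := if l ≤ wtN x then 1 else 0

lemma wtN_zero : wtN 0 = 0 := by simp [wtN]

lemma wtN_two_mul (x : ℕ) : wtN (2*x) = wtN x := by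
  rcases Nat.eq_zero_or_pos x with rfl | hx
  · simp
  · unfold wtN
    rw [Nat.digits_def' (by norm_num : (1:ℕ) < 2) (by omega : 0 < 2*x)]
    have h1 : (2*x) % 2 = 0 := by omega
    have h2 : (2*x) / 2 = x := by omega
    rw [h1, h2]
    simp [List.count_cons]

lemma wtN_two_mul_add_one (x : ℕ) : wtN (2*x+1) = wtN x + 1 := by
  unfold wtN
  rw [Nat.digits_def' (by norm_num : (1:ℕ) < 2) (by omega : 0 < 2*x+1)]
  have h1 : (2*x+1) % 2 = 1 := by omega
  have h2 : (2*x+1) / 2 = x := by omega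
  rw [h1, h2]
  simp [List.count_cons]

lemma one_le_wtN : ∀ x, 1 ≤ x → 1 ≤ wtN x := by
  intro x
  induction x using Nat.strong_induction_on with
  | _ x ih =>
    intro hx
    rcases Nat.even_or_odd x with ⟨y, hy⟩ | ⟨y, hy⟩
    · have hy2 : x = 2*y := by omega
      rw [hy2, wtN_two_mul]
      exact ih y (by omega) (by omega)
    · have hy2 : x = 2*y+1 := by omega
      rw [hy2, wtN_two_mul_add_one]
      omega

lemma wtN_le (x m : ℕ) (h : x < 2^m) : wtN x ≤ m := by
  rcases Nat.eq_zero_or_pos x with rfl | hx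
  · simp [wtN]
  · have h1 : wtN x ≤ (Nat.digits 2 x).length := List.count_le_length
    rw [Nat.digits_len 2 x (by norm_num) (by omega)] at h1
    have h2 : Nat.log 2 x < m := Nat.log_lt_of_lt_pow (by omega) h
    omega

lemma wcount_sum (l : ℕ) (S : Finset ℕ) : wcount l S = ∑ x ∈ S, ind l x := by
  rw [wcount, Finset.card_filter]
  apply Finset.sum_congr rfl
  intro x _
  rfl

lemma wcount_zero (S : Finset ℕ) : wcount 0 S = S.card := by
  simp [wcount]

lemma ind_two_mul (l x : ℕ) : ind l (2*x) = ind l x := by unfold ind; rw [wtN_two_mul]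

lemma ind_zero (l : ℕ) (hl : 1 ≤ l) : ind l 0 = 0 := by
  unfold ind; rw [wtN_zero, if_neg (by omega)]

lemma ind_key (l a x : ℕ) (hl : 1 ≤ l) (ha : 1 ≤ a) :
    ind (l-1) 0 + ind l x ≤ ind l a + ind (l-1) x := by
  have h1 := one_le_wtN a ha
  unfold ind
  rw [wtN_zero]
  split_ifs <;> omega

lemma ind_zero_le (l a : ℕ) (hl : 1 ≤ l) (ha : 1 ≤ a) : ind (l-1) 0 ≤ ind l a := by
  have h1 := one_le_wtN a ha
  unfold ind
  rw [wtN_zero]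
  split_ifs <;> omega

lemma sum_Icc_double (f : ℕ → ℕ) : ∀ b a, a ≤ b + 1 →
    (∑ x ∈ Finset.Icc (2*a) (2*b+1), f x) = ∑ x ∈ Finset.Icc a b, (f (2*x) + f (2*x+1)) := by
  intro b
  induction b with
  | zero =>
    intro a ha
    rcases a with _ | _ | a
    · rw [show (2*0:ℕ) = 0 from rfl, show (2*0+1:ℕ) = 0+1 from rfl,
        Finset.sum_Icc_succ_top (a := 0) (b := 0) (by omega)]
      simp [Finset.Icc_self]
    · rw [Finset.Icc_eq_empty (by omega), Finset.Icc_eq_empty (by omega)]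
      simp
    · omega
  | succ b ih =>
    intro a ha
    rcases Nat.lt_or_ge a (b+2) with h | h
    · have h1 : a ≤ b + 1 := by omega
      rw [show 2*(b+1)+1 = (2*b+2)+1 by ring]
      rw [Finset.sum_Icc_succ_top (b := 2*b+2) (by omega)]
      rw [show (2*b+2 : ℕ) = (2*b+1)+1 by ring]
      rw [Finset.sum_Icc_succ_top (b := 2*b+1) (by omega)]
      rw [Finset.sum_Icc_succ_top h1, ih a h1]
      rw [show 2*b+1+1 = 2*(b+1) by ring]
      omega
    · rw [Finset.Icc_eq_empty (by omega), Finset.Icc_eq_empty (by omega)]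
      simp

lemma wc_double (l a b : ℕ) (hl : 1 ≤ l) (hab : a ≤ b + 1) :
    wcount l (Finset.Icc (2*a) (2*b+1)) =
      wcount l (Finset.Icc a b) + wcount (l-1) (Finset.Icc a b) := by
  rw [wcount_sum, wcount_sum, wcount_sum, sum_Icc_double _ b a hab, ← Finset.sum_add_distrib]
  apply Finset.sum_congr rfl
  intro x _
  have h1 : ind l (2*x) = ind l x := ind_two_mul l x
  have h2 : ind l (2*x+1) = ind (l-1) x := by
    unfold ind
    rw [wtN_two_mul_add_one]
    split_ifs <;> omega
  omega

lemma wc_top (l a b : ℕ) (h : a ≤ b + 1) :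
    wcount l (Finset.Icc a (b+1)) = wcount l (Finset.Icc a b) + ind l (b+1) := by
  rw [wcount_sum, wcount_sum, Finset.sum_Icc_succ_top h]

lemma wc_top' (l a b : ℕ) (h : a ≤ b) (hb : 1 ≤ b) :
    wcount l (Finset.Icc a b) = wcount l (Finset.Icc a (b-1)) + ind l b := by
  obtain ⟨c, rfl⟩ : ∃ c, b = c + 1 := ⟨b-1, by omega⟩
  simpa using wc_top l a c (by omega)

lemma wc_bot (l a b : ℕ) (h : a ≤ b) :
    wcount l (Finset.Icc a b) = ind l a + wcount l (Finset.Icc (a+1) b) := by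
  rw [wcount_sum, wcount_sum,
    show Finset.Icc a b = insert a (Finset.Icc (a+1) b) by
      ext x; simp only [Finset.mem_Icc, Finset.mem_insert]; omega,
    Finset.sum_insert (by simp only [Finset.mem_Icc]; omega)]

lemma wcount_eq_zero (m n : ℕ) (h : n < 2^m) : wcount (m+1) (Finset.Icc 1 n) = 0 := by
  unfold wcount
  rw [Finset.card_eq_zero, Finset.filter_eq_empty_iff]
  intro x hx
  simp only [Finset.mem_Icc] at hx
  have : wtN x ≤ m := wtN_le x m (by omega)
  omega

lemma arith_facts (m : ℕ) (hm : 2 ≤ m) (hme : Even m) :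
    alph (m+1) = 2 * alph m + 1 ∧ bet (m+1) = 2 * bet m ∧ alph m = 2 * bet m ∧
    3 * bet m + 1 = 2^m ∧ 4 ≤ 2^m := by
  obtain ⟨k, hk⟩ := hme
  have h4 : (2:ℕ)^m = 4^k := by
    subst hk; rw [← two_mul, pow_mul]; norm_num
  have h1 : (2:ℕ)^m % 3 = 1 := by
    rw [h4, Nat.pow_mod]; norm_num
  have p1 : (2:ℕ)^(m+1) = 2 * 2^m := by ring
  have p2 : (2:ℕ)^(m+1+1) = 4 * 2^m := by ring
  have h2 : (2:ℕ)^(m+1) % 3 = 2 := by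
    rw [p1, Nat.mul_mod, h1]
  have h3 : (2:ℕ)^(m+1+1) % 3 = 1 := by
    rw [p2, Nat.mul_mod, h1]
  have d1 := Nat.div_add_mod (2^m) 3
  have d2 := Nat.div_add_mod (2^(m+1)) 3
  have d3 := Nat.div_add_mod (2^(m+1+1)) 3
  have hge : 4 ≤ 2^m := by
    calc (4:ℕ) = 2^2 := by norm_num
    _ ≤ 2^m := Nat.pow_le_pow_right (by norm_num) hm
  simp only [alph, bet]
  omega

/-- Extension of `Pm` to all levels `0 ≤ l ≤ m+1`. -/
lemma PmX {m i j : ℕ} (hm : 2 ≤ m) (hme : Even m) (hi : i ≤ alph m) (hj : j ≤ bet m)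
    (hP : Pm m i j) :
    ∀ l, l ≤ m + 1 →
      wcount l (Finset.Icc (alph m - i) (alph m - 1)) +
        wcount l (Finset.Icc (bet m - j) (bet m - 1)) ≥
        wcount l (Finset.Icc 1 (i + j)) := by
  obtain ⟨hA1, hB1, hAB, hB, hge⟩ := arith_facts m hm hme
  intro l hl
  rcases Nat.eq_zero_or_pos l with rfl | hl1
  · rw [wcount_zero, wcount_zero, wcount_zero, Nat.card_Icc, Nat.card_Icc, Nat.card_Icc]
    omega
  · rcases Nat.lt_or_ge l (m+1) with h | h
    · exact hP l hl1 (by omega)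
    · have hl' : l = m + 1 := by omega
      subst hl'
      have hz : wcount (m+1) (Finset.Icc 1 (i+j)) = 0 := wcount_eq_zero m (i+j) (by omega)
      omega

lemma caseA (m i j : ℕ) (hm : 2 ≤ m) (hme : Even m) (hi : i ≤ alph m) (hj : j ≤ bet m)
    (hP : Pm m i j) : Pm (m+1) (2*i+1) (2*j) := by
  obtain ⟨hA1, hB1, hAB, hB, hge⟩ := arith_facts m hm hme
  have hX := PmX hm hme hi hj hP
  intro l hl1 hl2
  rw [show alph (m+1) - (2*i+1) = 2*(alph m - i) by omega,
      show alph (m+1) - 1 = 2*(alph m) by omega,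
      show bet (m+1) - 2*j = 2*(bet m - j) by omega,
      show bet (m+1) - 1 = 2*(bet m - 1)+1 by omega,
      show 2*i+1+2*j = 2*(i+j)+1 by ring]
  have f1 : wcount l (Finset.Icc (2*(alph m - i)) (2*(alph m))) =
      wcount l (Finset.Icc (alph m - i) (alph m - 1)) +
      wcount (l-1) (Finset.Icc (alph m - i) (alph m - 1)) + ind l (alph m) := by
    rw [wc_top' l (2*(alph m - i)) (2*(alph m)) (by omega) (by omega),
        show 2*(alph m) - 1 = 2*(alph m - 1)+1 by omega,
        wc_double l (alph m - i) (alph m - 1) hl1 (by omega),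
        ind_two_mul]
  have f2 : wcount l (Finset.Icc (2*(bet m - j)) (2*(bet m - 1)+1)) =
      wcount l (Finset.Icc (bet m - j) (bet m - 1)) +
      wcount (l-1) (Finset.Icc (bet m - j) (bet m - 1)) :=
    wc_double l (bet m - j) (bet m - 1) hl1 (by omega)
  have f3 : wcount l (Finset.Icc 1 (2*(i+j)+1)) =
      wcount l (Finset.Icc 1 (i+j)) + wcount (l-1) (Finset.Icc 1 (i+j)) + ind (l-1) 0 := by
    have h1 := wc_double l 0 (i+j) hl1 (by omega)
    rw [Nat.mul_zero] at h1
    have h2 : wcount l (Finset.Icc 0 (2*(i+j)+1)) =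
        ind l 0 + wcount l (Finset.Icc 1 (2*(i+j)+1)) := wc_bot l 0 _ (by omega)
    have h3 : wcount l (Finset.Icc 0 (i+j)) =
        ind l 0 + wcount l (Finset.Icc 1 (i+j)) := wc_bot l 0 _ (by omega)
    have h4 : wcount (l-1) (Finset.Icc 0 (i+j)) =
        ind (l-1) 0 + wcount (l-1) (Finset.Icc 1 (i+j)) := wc_bot (l-1) 0 _ (by omega)
    have h5 : ind l 0 = 0 := ind_zero l hl1
    omega
  have g1 := hX l (by omega)
  have g2 := hX (l-1) (by omega)
  have key : ind (l-1) 0 ≤ ind l (alph m) := ind_zero_le l (alph m) hl1 (by omega)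
  omega

lemma caseB (m i j : ℕ) (hm : 2 ≤ m) (hme : Even m) (hi : i ≤ alph m) (hj : j ≤ bet m)
    (hi1 : 1 ≤ i) (hP0 : Pm m (i-1) j) (hP : Pm m i j) : Pm (m+1) (2*i) (2*j) := by
  obtain ⟨hA1, hB1, hAB, hB, hge⟩ := arith_facts m hm hme
  have hX := PmX hm hme hi hj hP
  have hX0 := PmX hm hme (show i-1 ≤ alph m by omega) hj hP0
  intro l hl1 hl2
  rw [show alph (m+1) - 2*i = 2*(alph m - i)+1 by omega,
      show alph (m+1) - 1 = 2*(alph m) by omega,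
      show bet (m+1) - 2*j = 2*(bet m - j) by omega,
      show bet (m+1) - 1 = 2*(bet m - 1)+1 by omega,
      show 2*i+2*j = 2*(i+j) by ring]
  have f1 : wcount l (Finset.Icc (2*(alph m - i)) (2*(alph m))) =
      wcount l (Finset.Icc (alph m - i) (alph m - 1)) +
      wcount (l-1) (Finset.Icc (alph m - i) (alph m - 1)) + ind l (alph m) := by
    rw [wc_top' l (2*(alph m - i)) (2*(alph m)) (by omega) (by omega),
        show 2*(alph m) - 1 = 2*(alph m - 1)+1 by omega,
        wc_double l (alph m - i) (alph m - 1) hl1 (by omega),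
        ind_two_mul]
  have f1b : wcount l (Finset.Icc (2*(alph m - i)) (2*(alph m))) =
      ind l (alph m - i) + wcount l (Finset.Icc (2*(alph m - i)+1) (2*(alph m))) := by
    rw [wc_bot l (2*(alph m - i)) (2*(alph m)) (by omega), ind_two_mul]
  have fsplit : wcount l (Finset.Icc (alph m - i) (alph m - 1)) =
      ind l (alph m - i) + wcount l (Finset.Icc (alph m - i + 1) (alph m - 1)) :=
    wc_bot l (alph m - i) (alph m - 1) (by omega)
  have f2 : wcount l (Finset.Icc (2*(bet m - j)) (2*(bet m - 1)+1)) =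
      wcount l (Finset.Icc (bet m - j) (bet m - 1)) +
      wcount (l-1) (Finset.Icc (bet m - j) (bet m - 1)) :=
    wc_double l (bet m - j) (bet m - 1) hl1 (by omega)
  have f3 : wcount l (Finset.Icc 1 (2*(i+j))) =
      wcount l (Finset.Icc 1 (i+j-1)) + wcount (l-1) (Finset.Icc 1 (i+j-1)) +
      ind (l-1) 0 + ind l (i+j) := by
    have h0 : wcount l (Finset.Icc 0 (2*(i+j))) =
        wcount l (Finset.Icc 0 (2*(i+j)-1)) + ind l (2*(i+j)) :=
      wc_top' l 0 (2*(i+j)) (by omega) (by omega)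
    rw [show 2*(i+j)-1 = 2*(i+j-1)+1 by omega, ind_two_mul] at h0
    have h1 := wc_double l 0 (i+j-1) hl1 (by omega)
    rw [Nat.mul_zero] at h1
    have h2 : wcount l (Finset.Icc 0 (2*(i+j))) =
        ind l 0 + wcount l (Finset.Icc 1 (2*(i+j))) := wc_bot l 0 _ (by omega)
    have h3 : wcount l (Finset.Icc 0 (i+j-1)) =
        ind l 0 + wcount l (Finset.Icc 1 (i+j-1)) := wc_bot l 0 _ (by omega)
    have h4 : wcount (l-1) (Finset.Icc 0 (i+j-1)) =
        ind (l-1) 0 + wcount (l-1) (Finset.Icc 1 (i+j-1)) := wc_bot (l-1) 0 _ (by omega)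
    have h5 : ind l 0 = 0 := ind_zero l hl1
    omega
  have fsplit2 : wcount (l-1) (Finset.Icc 1 (i+j)) =
      wcount (l-1) (Finset.Icc 1 (i+j-1)) + ind (l-1) (i+j) := by
    have := wc_top' (l-1) 1 (i+j) (by omega) (by omega)
    exact this
  have g1 := hX0 l (by omega)
  rw [show alph m - (i-1) = alph m - i + 1 by omega, show i-1+j = i+j-1 by omega] at g1
  have g2 := hX (l-1) (by omega)
  have key := ind_key l (alph m) (i+j) hl1 (by omega)
  omega

lemma caseC (m i j : ℕ) (hm : 2 ≤ m) (hme : Even m) (hi : i ≤ alph m) (hj : j ≤ bet m)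
    (hj1 : j + 1 ≤ bet m) (hP : Pm m i j) (hP1 : Pm m i (j+1)) :
    Pm (m+1) (2*i+1) (2*j+1) := by
  obtain ⟨hA1, hB1, hAB, hB, hge⟩ := arith_facts m hm hme
  have hX := PmX hm hme hi hj hP
  have hX1 := PmX hm hme hi hj1 hP1
  intro l hl1 hl2
  rw [show alph (m+1) - (2*i+1) = 2*(alph m - i) by omega,
      show alph (m+1) - 1 = 2*(alph m) by omega,
      show bet (m+1) - (2*j+1) = 2*(bet m - j - 1)+1 by omega,
      show bet (m+1) - 1 = 2*(bet m - 1)+1 by omega,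
      show 2*i+1+(2*j+1) = 2*(i+j+1) by ring]
  have f1 : wcount l (Finset.Icc (2*(alph m - i)) (2*(alph m))) =
      wcount l (Finset.Icc (alph m - i) (alph m - 1)) +
      wcount (l-1) (Finset.Icc (alph m - i) (alph m - 1)) + ind l (alph m) := by
    rw [wc_top' l (2*(alph m - i)) (2*(alph m)) (by omega) (by omega),
        show 2*(alph m) - 1 = 2*(alph m - 1)+1 by omega,
        wc_double l (alph m - i) (alph m - 1) hl1 (by omega),
        ind_two_mul]
  have s1 : wcount l (Finset.Icc (2*(bet m - j - 1)) (2*(bet m - 1)+1)) =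
      ind l (bet m - j - 1) + wcount l (Finset.Icc (2*(bet m - j - 1)+1) (2*(bet m - 1)+1)) := by
    rw [wc_bot l (2*(bet m - j - 1)) (2*(bet m - 1)+1) (by omega), ind_two_mul]
  have s2 : wcount l (Finset.Icc (2*(bet m - j - 1)) (2*(bet m - 1)+1)) =
      wcount l (Finset.Icc (bet m - j - 1) (bet m - 1)) +
      wcount (l-1) (Finset.Icc (bet m - j - 1) (bet m - 1)) :=
    wc_double l (bet m - j - 1) (bet m - 1) hl1 (by omega)
  have s3 : wcount l (Finset.Icc (bet m - j - 1) (bet m - 1)) =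
      ind l (bet m - j - 1) + wcount l (Finset.Icc (bet m - j) (bet m - 1)) := by
    have := wc_bot l (bet m - j - 1) (bet m - 1) (by omega)
    rw [show bet m - j - 1 + 1 = bet m - j by omega] at this
    exact this
  have f3 : wcount l (Finset.Icc 1 (2*(i+j+1))) =
      wcount l (Finset.Icc 1 (i+j)) + wcount (l-1) (Finset.Icc 1 (i+j)) +
      ind (l-1) 0 + ind l (i+j+1) := by
    have h0 : wcount l (Finset.Icc 0 (2*(i+j+1))) =
        wcount l (Finset.Icc 0 (2*(i+j+1)-1)) + ind l (2*(i+j+1)) :=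
      wc_top' l 0 (2*(i+j+1)) (by omega) (by omega)
    rw [show 2*(i+j+1)-1 = 2*(i+j)+1 by omega, ind_two_mul] at h0
    have h1 := wc_double l 0 (i+j) hl1 (by omega)
    rw [Nat.mul_zero] at h1
    have h2 : wcount l (Finset.Icc 0 (2*(i+j+1))) =
        ind l 0 + wcount l (Finset.Icc 1 (2*(i+j+1))) := wc_bot l 0 _ (by omega)
    have h3 : wcount l (Finset.Icc 0 (i+j)) =
        ind l 0 + wcount l (Finset.Icc 1 (i+j)) := wc_bot l 0 _ (by omega)
    have h4 : wcount (l-1) (Finset.Icc 0 (i+j)) =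
        ind (l-1) 0 + wcount (l-1) (Finset.Icc 1 (i+j)) := wc_bot (l-1) 0 _ (by omega)
    have h5 : ind l 0 = 0 := ind_zero l hl1
    omega
  have g1 := hX l (by omega)
  have g2 := hX1 (l-1) (by omega)
  rw [show bet m - (j+1) = bet m - j - 1 by omega, show i+(j+1) = i+j+1 by ring] at g2
  have fsplit2 : wcount (l-1) (Finset.Icc 1 (i+j+1)) =
      wcount (l-1) (Finset.Icc 1 (i+j)) + ind (l-1) (i+j+1) :=
    wc_top (l-1) 1 (i+j) (by omega)
  have key := ind_key l (alph m) (i+j+1) hl1 (by omega)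
  omega

lemma caseD (m i j : ℕ) (hm : 2 ≤ m) (hme : Even m) (hi : i ≤ alph m) (hj : j ≤ bet m)
    (hi1 : 1 ≤ i) (hj1 : j + 1 ≤ bet m) (hP : Pm m i j) (hP2 : Pm m (i-1) (j+1)) :
    Pm (m+1) (2*i) (2*j+1) := by
  obtain ⟨hA1, hB1, hAB, hB, hge⟩ := arith_facts m hm hme
  have hX := PmX hm hme hi hj hP
  have hX2 := PmX hm hme (show i-1 ≤ alph m by omega) hj1 hP2
  intro l hl1 hl2
  rw [show alph (m+1) - 2*i = 2*(alph m - i)+1 by omega,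
      show alph (m+1) - 1 = 2*(alph m) by omega,
      show bet (m+1) - (2*j+1) = 2*(bet m - j - 1)+1 by omega,
      show bet (m+1) - 1 = 2*(bet m - 1)+1 by omega,
      show 2*i+(2*j+1) = 2*(i+j)+1 by ring]
  have f1 : wcount l (Finset.Icc (2*(alph m - i)) (2*(alph m))) =
      wcount l (Finset.Icc (alph m - i) (alph m - 1)) +
      wcount (l-1) (Finset.Icc (alph m - i) (alph m - 1)) + ind l (alph m) := by
    rw [wc_top' l (2*(alph m - i)) (2*(alph m)) (by omega) (by omega),
        show 2*(alph m) - 1 = 2*(alph m - 1)+1 by omega,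
        wc_double l (alph m - i) (alph m - 1) hl1 (by omega),
        ind_two_mul]
  have f1b : wcount l (Finset.Icc (2*(alph m - i)) (2*(alph m))) =
      ind l (alph m - i) + wcount l (Finset.Icc (2*(alph m - i)+1) (2*(alph m))) := by
    rw [wc_bot l (2*(alph m - i)) (2*(alph m)) (by omega), ind_two_mul]
  have fsplitQ : wcount (l-1) (Finset.Icc (alph m - i) (alph m - 1)) =
      ind (l-1) (alph m - i) + wcount (l-1) (Finset.Icc (alph m - i + 1) (alph m - 1)) :=
    wc_bot (l-1) (alph m - i) (alph m - 1) (by omega)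
  have s1 : wcount l (Finset.Icc (2*(bet m - j - 1)) (2*(bet m - 1)+1)) =
      ind l (bet m - j - 1) + wcount l (Finset.Icc (2*(bet m - j - 1)+1) (2*(bet m - 1)+1)) := by
    rw [wc_bot l (2*(bet m - j - 1)) (2*(bet m - 1)+1) (by omega), ind_two_mul]
  have s2 : wcount l (Finset.Icc (2*(bet m - j - 1)) (2*(bet m - 1)+1)) =
      wcount l (Finset.Icc (bet m - j - 1) (bet m - 1)) +
      wcount (l-1) (Finset.Icc (bet m - j - 1) (bet m - 1)) :=
    wc_double l (bet m - j - 1) (bet m - 1) hl1 (by omega)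
  have s3 : wcount l (Finset.Icc (bet m - j - 1) (bet m - 1)) =
      ind l (bet m - j - 1) + wcount l (Finset.Icc (bet m - j) (bet m - 1)) := by
    have := wc_bot l (bet m - j - 1) (bet m - 1) (by omega)
    rw [show bet m - j - 1 + 1 = bet m - j by omega] at this
    exact this
  have f3 : wcount l (Finset.Icc 1 (2*(i+j)+1)) =
      wcount l (Finset.Icc 1 (i+j)) + wcount (l-1) (Finset.Icc 1 (i+j)) + ind (l-1) 0 := by
    have h1 := wc_double l 0 (i+j) hl1 (by omega)
    rw [Nat.mul_zero] at h1
    have h2 : wcount l (Finset.Icc 0 (2*(i+j)+1)) =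
        ind l 0 + wcount l (Finset.Icc 1 (2*(i+j)+1)) := wc_bot l 0 _ (by omega)
    have h3 : wcount l (Finset.Icc 0 (i+j)) =
        ind l 0 + wcount l (Finset.Icc 1 (i+j)) := wc_bot l 0 _ (by omega)
    have h4 : wcount (l-1) (Finset.Icc 0 (i+j)) =
        ind (l-1) 0 + wcount (l-1) (Finset.Icc 1 (i+j)) := wc_bot (l-1) 0 _ (by omega)
    have h5 : ind l 0 = 0 := ind_zero l hl1
    omega
  have g1 := hX l (by omega)
  have g2 := hX2 (l-1) (by omega)
  rw [show alph m - (i-1) = alph m - i + 1 by omega,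
      show bet m - (j+1) = bet m - j - 1 by omega,
      show i-1+(j+1) = i+j by omega] at g2
  have key := ind_key l (alph m) (alph m - i) hl1 (by omega)
  omega

/-- Lemma 8: implications among the `P` statements for even `m ≥ 2`. -/
theorem stmt17 (m : ℕ) (hm : 2 ≤ m) (hme : Even m) (i j : ℕ)
    (hi : i ≤ alph m) (hj : j ≤ bet m) :
    (Pm m i j → Pm (m + 1) (2 * i + 1) (2 * j)) ∧
    (1 ≤ i → Pm m (i - 1) j → Pm m i j → Pm (m + 1) (2 * i) (2 * j)) ∧
    (j + 1 ≤ bet m → Pm m i j → Pm m i (j + 1) → Pm (m + 1) (2 * i + 1) (2 * j + 1)) ∧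
    (1 ≤ i → j + 1 ≤ bet m → Pm m (i - 1) j → Pm m i j → Pm m (i - 1) (j + 1) →
      Pm m i (j + 1) → Pm (m + 1) (2 * i) (2 * j + 1)) := by
  refine ⟨fun h => caseA m i j hm hme hi hj h,
    fun h1 h2 h3 => caseB m i j hm hme hi hj h1 h2 h3,
    fun h1 h2 h3 => caseC m i j hm hme hi hj h1 h2 h3,
    fun h1 h2 _ h4 h5 _ => caseD m i j hm hme hi hj h1 h2 h4 h5⟩
end

section
/- Let m ≥ 3 be odd and let i, j be integers with 0 ≤ i ≤ α^(m) and 0 ≤ j ≤ β^(m). Then: (a) P^(m)(i,j) implies P^(m+1)(2i, 2j+1); (b) if j ≥ 1, then P^(m)(i,j−1) and P^(m)(i,j) together imply P^(m+1)(2i, 2j); (c) if i+1 ≤ α^(m), then P^(m)(i,j) and P^(m)(i+1,j) together imply P^(m+1)(2i+1, 2j+1); (d) if j ≥ 1 and i+1 ≤ α^(m), then P^(m)(i,j−1), P^(m)(i,j), P^(m)(i+1,j−1) and P^(m)(i+1,j) together imply P^(m+1)(2i+1, 2j). -/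
open Module

lemma wtN_lt_pow {x n : ℕ} (h : x < 2^n) : wtN x ≤ n := by
  rcases Nat.eq_zero_or_pos x with rfl | hx
  · simp [wtN]
  have h1 : wtN x ≤ (Nat.digits 2 x).length := List.count_le_length
  have h2 : (Nat.digits 2 x).length = Nat.log 2 x + 1 :=
    Nat.digits_len 2 x (by norm_num) (by omega)
  have h3 : Nat.log 2 x < n := Nat.log_lt_of_lt_pow (by omega) h
  omega

lemma wtN_pos : ∀ x : ℕ, 1 ≤ x → 1 ≤ wtN x := by
  intro x
  induction x using Nat.strong_induction_on with
  | _ x ih =>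
    intro hx
    rcases Nat.even_or_odd x with ⟨y, hy⟩ | ⟨y, hy⟩
    · rw [show x = 2*y by omega, wtN_two_mul]
      exact ih y (by omega) (by omega)
    · rw [show x = 2*y+1 by omega, wtN_two_mul_add_one]
      omega

lemma wcount_insert (l x : ℕ) (S : Finset ℕ) (hx : x ∉ S) :
    wcount l (insert x S) = (if l ≤ wtN x then 1 else 0) + wcount l S := by
  unfold wcount
  rw [Finset.filter_insert]
  split_ifs with h
  · rw [Finset.card_insert_of_notMem (by simp [hx])]
    omega
  · simp

lemma wcount_left (l u v : ℕ) (h : u ≤ v) :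
    wcount l (Finset.Icc u v) = (if l ≤ wtN u then 1 else 0) + wcount l (Finset.Icc (u+1) v) := by
  have h1 : Finset.Icc u v = insert u (Finset.Icc (u+1) v) := by
    ext x; simp only [Finset.mem_Icc, Finset.mem_insert]; omega
  rw [h1, wcount_insert]
  simp only [Finset.mem_Icc]
  omega

lemma wcount_right (l u v : ℕ) (h : u ≤ v+1) :
    wcount l (Finset.Icc u (v+1)) = (if l ≤ wtN (v+1) then 1 else 0) + wcount l (Finset.Icc u v) := by
  have h1 : Finset.Icc u (v+1) = insert (v+1) (Finset.Icc u v) := by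
    ext x; simp only [Finset.mem_Icc, Finset.mem_insert]; omega
  rw [h1, wcount_insert]
  simp only [Finset.mem_Icc]
  omega

lemma wcount_double (l u v : ℕ) (hl : 1 ≤ l) :
    wcount l (Finset.Icc (2*u) (2*v+1)) =
      wcount l (Finset.Icc u v) + wcount (l-1) (Finset.Icc u v) := by
  have hset : Finset.Icc (2*u) (2*v+1) =
      (Finset.Icc u v).image (fun x => 2*x) ∪ (Finset.Icc u v).image (fun x => 2*x+1) := by
    ext x
    simp only [Finset.mem_Icc, Finset.mem_union, Finset.mem_image]
    constructor
    · intro hx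
      rcases Nat.even_or_odd x with ⟨y, hy⟩ | ⟨y, hy⟩
      · exact Or.inl ⟨y, by omega, by omega⟩
      · exact Or.inr ⟨y, by omega, by omega⟩
    · rintro (⟨y, hy, rfl⟩ | ⟨y, hy, rfl⟩) <;> omega
  unfold wcount
  rw [hset, Finset.filter_union, Finset.card_union_of_disjoint]
  · congr 1
    · rw [Finset.filter_image, Finset.card_image_of_injective _
        (by intro a b h; dsimp only at h; omega)]
      congr 1
      apply Finset.filter_congr
      intro x _
      simp [wtN_two_mul]
    · rw [Finset.filter_image, Finset.card_image_of_injective _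
        (by intro a b h; dsimp only at h; omega)]
      congr 1
      apply Finset.filter_congr
      intro x _
      simp only [wtN_two_mul_add_one]
      constructor <;> intro h' <;> omega
  · apply Finset.disjoint_filter_filter
    simp only [Finset.disjoint_left, Finset.mem_image]
    rintro a ⟨y, _, rfl⟩ ⟨z, _, hz⟩
    omega

lemma wcount_Icc_one_odd (l s : ℕ) (hl : 1 ≤ l) :
    wcount l (Finset.Icc 1 (2*s+1)) =
      wcount l (Finset.Icc 1 s) + wcount (l-1) (Finset.Icc 1 s) + (if l ≤ 1 then 1 else 0) := by
  have h1 := wcount_double l 0 s hl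
  rw [mul_zero] at h1
  have h2 := wcount_left l 0 (2*s+1) (by omega)
  have h3 := wcount_left l 0 s (Nat.zero_le s)
  have h4 := wcount_left (l-1) 0 s (Nat.zero_le s)
  rw [Nat.zero_add] at h2 h3 h4
  have hw0 : wtN 0 = 0 := by simp [wtN]
  rw [hw0] at h2 h3 h4
  split_ifs at * <;> omega

lemma wcount_Icc_one_even (l s : ℕ) (hl : 1 ≤ l) (hs : 1 ≤ s) :
    wcount l (Finset.Icc 1 (2*s)) + (if l-1 ≤ wtN s then 1 else 0) =
      wcount l (Finset.Icc 1 s) + wcount (l-1) (Finset.Icc 1 s) + (if l ≤ 1 then 1 else 0) := by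
  have h0 := wcount_Icc_one_odd l s hl
  have h1 := wcount_right l 1 (2*s) (by omega)
  rw [wtN_two_mul_add_one] at h1
  split_ifs at * <;> omega

lemma wcount_B_odd (l u v : ℕ) (hl : 1 ≤ l) (huv : u ≤ v) :
    wcount l (Finset.Icc (2*u) (2*v)) + (if l-1 ≤ wtN v then 1 else 0) =
      wcount l (Finset.Icc u v) + wcount (l-1) (Finset.Icc u v) := by
  have hd := wcount_double l u v hl
  have hR := wcount_right l (2*u) (2*v) (by omega)
  rw [wtN_two_mul_add_one] at hR
  split_ifs at * <;> omega

lemma wcount_B_even (l u v : ℕ) (hl : 1 ≤ l) (huv : u ≤ v) :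
    wcount l (Finset.Icc (2*u+1) (2*v)) + (if l ≤ wtN u then 1 else 0)
        + (if l-1 ≤ wtN v then 1 else 0) =
      wcount l (Finset.Icc u v) + wcount (l-1) (Finset.Icc u v) := by
  have hd := wcount_double l u v hl
  have hL := wcount_left l (2*u) (2*v+1) (by omega)
  have hR := wcount_right l (2*u+1) (2*v) (by omega)
  rw [wtN_two_mul u] at hL
  rw [wtN_two_mul_add_one v] at hR
  split_ifs at * <;> omega

lemma wcount_A_odd (l u v : ℕ) (hl : 1 ≤ l) (huv : u ≤ v) :
    wcount l (Finset.Icc (2*u+1) (2*v+1)) + (if l ≤ wtN u then 1 else 0) =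
      wcount l (Finset.Icc u v) + wcount (l-1) (Finset.Icc u v) := by
  have hd := wcount_double l u v hl
  have hL := wcount_left l (2*u) (2*v+1) (by omega)
  rw [wtN_two_mul u] at hL
  split_ifs at * <;> omega

lemma ext_lemma (m b i j : ℕ) (h2 : 2^m = 3*b+2)
    (ha : alph m = 2*b+1) (hbet : bet m = b)
    (hi : i ≤ 2*b+1) (hj : j ≤ b) (hP : Pm m i j) (t : ℕ) :
    wcount t (Finset.Icc 1 (i+j)) ≤
      wcount t (Finset.Icc (2*b+1-i) (2*b)) + wcount t (Finset.Icc (b-j) (b-1)) := by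
  rcases Nat.eq_zero_or_pos t with rfl | ht
  · rw [wcount_zero, wcount_zero, wcount_zero, Nat.card_Icc, Nat.card_Icc, Nat.card_Icc]
    omega
  rcases le_or_gt t m with htm | htm
  · have h := hP t ht htm
    rw [ha, hbet, show 2*b+1-1 = 2*b by omega] at h
    exact h
  · have hz : wcount t (Finset.Icc 1 (i+j)) = 0 := by
      rw [wcount, Finset.card_eq_zero, Finset.filter_eq_empty_iff]
      intro x hx
      rw [Finset.mem_Icc] at hx
      have hxlt : x < 2^m := by omega
      have := wtN_lt_pow hxlt
      omega
    omega

set_option maxHeartbeats 1000000 in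
/-- Lemma 9: implications among the `P` statements for odd `m ≥ 3`. -/
theorem stmt18 (m : ℕ) (hm : 3 ≤ m) (hmo : Odd m) (i j : ℕ)
    (hi : i ≤ alph m) (hj : j ≤ bet m) :
    (Pm m i j → Pm (m + 1) (2 * i) (2 * j + 1)) ∧
    (1 ≤ j → Pm m i (j - 1) → Pm m i j → Pm (m + 1) (2 * i) (2 * j)) ∧
    (i + 1 ≤ alph m → Pm m i j → Pm m (i + 1) j → Pm (m + 1) (2 * i + 1) (2 * j + 1)) ∧
    (1 ≤ j → i + 1 ≤ alph m → Pm m i (j - 1) → Pm m i j → Pm m (i + 1) (j - 1) →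
      Pm m (i + 1) j → Pm (m + 1) (2 * i + 1) (2 * j)) := by
  have hmod : 2 ^ m % 3 = 2 := by
    obtain ⟨k, hk⟩ := hmo
    have hm' : m = 2 * k + 1 := by omega
    rw [hm', pow_succ, pow_mul, Nat.mul_mod, Nat.pow_mod]
    norm_num
  obtain ⟨b, hbet⟩ : ∃ b, bet m = b := ⟨_, rfl⟩
  have h2m : 2 ^ m = 3 * b + 2 := by
    have := Nat.div_add_mod (2^m) 3
    unfold bet at hbet
    omega
  have ha : alph m = 2 * b + 1 := by
    unfold alph
    have h1 : 2 ^ (m+1) = 2 * 2 ^ m := by ring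
    omega
  have hA : alph (m+1) = 4 * b + 2 := by
    unfold alph
    have h1 : 2 ^ (m+1+1) = 4 * 2 ^ m := by ring
    omega
  have hB : bet (m+1) = 2 * b + 1 := by
    unfold bet
    have h1 : 2 ^ (m+1) = 2 * 2 ^ m := by ring
    omega
  have h8 : 8 ≤ 2 ^ m := by
    calc (8:ℕ) = 2^3 := by norm_num
    _ ≤ 2^m := Nat.pow_le_pow_right (by norm_num) hm
  have hb2 : 2 ≤ b := by omega
  have hwb : 1 ≤ wtN b := wtN_pos b (by omega)
  have hw0 : wtN 0 = 0 := by simp [wtN]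
  rw [ha] at hi
  rw [hbet] at hj
  refine ⟨?_, ?_, ?_, ?_⟩
  · -- (a)
    intro hP l hl1 hl2
    have E1 := ext_lemma m b i j h2m ha hbet hi hj hP l
    have E2 := ext_lemma m b i j h2m ha hbet hi hj hP (l-1)
    rw [hA, hB, show 4*b+2 - 2*i = 2*(2*b+1-i) by omega,
        show 4*b+2 - 1 = 2*(2*b)+1 by omega,
        show 2*b+1 - (2*j+1) = 2*(b-j) by omega,
        show 2*b+1-1 = 2*b by omega,
        show 2*i + (2*j+1) = 2*(i+j)+1 by ring,
        wcount_double l (2*b+1-i) (2*b) hl1]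
    have hBt := wcount_B_odd l (b-j) b hl1 (by omega)
    have hZ := wcount_Icc_one_odd l (i+j) hl1
    have hY1 := wcount_right l (b-j) (b-1) (by omega)
    have hY2 := wcount_right (l-1) (b-j) (b-1) (by omega)
    rw [show b-1+1 = b by omega] at hY1 hY2
    split_ifs at E1 E2 hBt hZ hY1 hY2 ⊢ <;> omega
  · -- (b)
    intro hj1 hP1 hP2 l hl1 hl2
    have E1 := ext_lemma m b i j h2m ha hbet hi hj hP2 l
    have E2 := ext_lemma m b i (j-1) h2m ha hbet hi (by omega) hP1 (l-1)
    rw [show i+(j-1) = i+j-1 by omega, show b-(j-1) = b-j+1 by omega] at E2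
    rw [hA, hB, show 4*b+2 - 2*i = 2*(2*b+1-i) by omega,
        show 4*b+2 - 1 = 2*(2*b)+1 by omega,
        show 2*b+1 - 2*j = 2*(b-j)+1 by omega,
        show 2*b+1-1 = 2*b by omega,
        show 2*i + 2*j = 2*(i+j) by ring,
        wcount_double l (2*b+1-i) (2*b) hl1]
    have hBt := wcount_B_even l (b-j) b hl1 (by omega)
    have hY1 := wcount_right l (b-j) (b-1) (by omega)
    have hY2 := wcount_right (l-1) (b-j) (b-1) (by omega)
    rw [show b-1+1 = b by omega] at hY1 hY2
    have hW2 := wcount_left (l-1) (b-j) (b-1) (by omega)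
    have hZ := wcount_Icc_one_even l (i+j) hl1 (by omega)
    have hZr := wcount_right (l-1) 1 (i+j-1) (by omega)
    rw [show i+j-1+1 = i+j by omega] at hZr
    split_ifs at E1 E2 hBt hY1 hY2 hW2 hZ hZr ⊢ <;> omega
  · -- (c)
    intro hi1 hP1 hP2 l hl1 hl2
    rw [ha] at hi1
    have E1 := ext_lemma m b i j h2m ha hbet hi hj hP1 l
    have E2 := ext_lemma m b (i+1) j h2m ha hbet (by omega) hj hP2 (l-1)
    rw [show 2*b+1-(i+1) = 2*b-i by omega, show i+1+j = i+j+1 by omega] at E2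
    rw [hA, hB, show 4*b+2 - (2*i+1) = 2*(2*b-i)+1 by omega,
        show 4*b+2 - 1 = 2*(2*b)+1 by omega,
        show 2*b+1 - (2*j+1) = 2*(b-j) by omega,
        show 2*b+1-1 = 2*b by omega,
        show 2*i+1 + (2*j+1) = 2*(i+j+1) by ring]
    have hAt := wcount_A_odd l (2*b-i) (2*b) hl1 (by omega)
    have hX1 := wcount_left l (2*b-i) (2*b) (by omega)
    rw [show 2*b-i+1 = 2*b+1-i by omega] at hX1
    have hBt := wcount_B_odd l (b-j) b hl1 (by omega)
    have hY1 := wcount_right l (b-j) (b-1) (by omega)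
    have hY2 := wcount_right (l-1) (b-j) (b-1) (by omega)
    rw [show b-1+1 = b by omega] at hY1 hY2
    have hZ := wcount_Icc_one_even l (i+j+1) hl1 (by omega)
    have hZr := wcount_right l 1 (i+j) (by omega)
    split_ifs at E1 E2 hAt hX1 hBt hY1 hY2 hZ hZr ⊢ <;> omega
  · -- (d)
    intro hj1 hi1 hP1 hP2 hP3 hP4 l hl1 hl2
    rw [ha] at hi1
    have E1 := ext_lemma m b i j h2m ha hbet hi hj hP2 l
    have E2 := ext_lemma m b (i+1) (j-1) h2m ha hbet (by omega) (by omega) hP3 (l-1)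
    rw [show i+1+(j-1) = i+j by omega, show 2*b+1-(i+1) = 2*b-i by omega,
        show b-(j-1) = b-j+1 by omega] at E2
    rw [hA, hB, show 4*b+2 - (2*i+1) = 2*(2*b-i)+1 by omega,
        show 4*b+2 - 1 = 2*(2*b)+1 by omega,
        show 2*b+1 - 2*j = 2*(b-j)+1 by omega,
        show 2*b+1-1 = 2*b by omega,
        show 2*i+1 + 2*j = 2*(i+j)+1 by ring]
    have hAt := wcount_A_odd l (2*b-i) (2*b) hl1 (by omega)
    have hX1 := wcount_left l (2*b-i) (2*b) (by omega)
    rw [show 2*b-i+1 = 2*b+1-i by omega] at hX1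
    have hBt := wcount_B_even l (b-j) b hl1 (by omega)
    have hY1 := wcount_right l (b-j) (b-1) (by omega)
    have hY2 := wcount_right (l-1) (b-j) (b-1) (by omega)
    rw [show b-1+1 = b by omega] at hY1 hY2
    have hW1 := wcount_left l (b-j) (b-1) (by omega)
    have hW2 := wcount_left (l-1) (b-j) (b-1) (by omega)
    have hZ := wcount_Icc_one_odd l (i+j) hl1
    split_ifs at E1 E2 hAt hX1 hBt hY1 hY2 hW1 hW2 hZ ⊢ <;> omega
end
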